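/- Let s ≥ 4 and let A be a symmetric s × s complex matrix (Aᵀ = A). Then there exists μ ∈ ℂ such that the matrix A − μ • 1 has rank at most 1 (equivalently, A has an eigenspace of codimension at most 1) if and only if for all pairwise distinct indices i, j, k, ℓ ∈ Fin s the 2×2 minors of A satisfy: A_{ij|kℓ} = 0, A_{ik|iℓ} = A_{jk|jℓ}, and A_{ik|ik} − A_{iℓ|iℓ} = A_{jk|jk} − A_{jℓ|jℓ}. -/

import Mathlib

set_option linter.unusedSectionVars false
set_option maxHeartbeats 1000000

open Matrix

/-- The 2×2 minor of a square matrix `A` with rows `a, b` and columns `c, d`. -/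
def minor2 {s : ℕ} (A : Matrix (Fin s) (Fin s) ℂ) (a b c d : Fin s) : ℂ :=
  A a c * A b d - A a d * A b c


lemma rank_le_one_iff_minor {s : ℕ} (B : Matrix (Fin s) (Fin s) ℂ) :
    B.rank ≤ 1 ↔ ∀ a b c d, B a c * B b d = B a d * B b c := by
  constructor
  · intro h a b c d
    by_contra hne
    set M := B.submatrix ![a, b] ![c, d] with hM
    have hdet : M.det ≠ 0 := by
      rw [hM, Matrix.det_fin_two]
      simpa using sub_ne_zero.mpr hne
    have h2 : M.rank = 2 := by
      rw [Matrix.rank_of_isUnit _ (Matrix.isUnit_iff_isUnit_det M |>.mpr hdet.isUnit),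
        Fintype.card_fin]
    have hsplit : M = (1 : Matrix (Fin s) (Fin s) ℂ).submatrix ![a, b] _root_.id *
        (B * (1 : Matrix (Fin s) (Fin s) ℂ).submatrix _root_.id ![c, d]) := by
      rw [hM]
      have e1 : B.submatrix ![a, b] ![c, d] = ((1 : Matrix (Fin s) (Fin s) ℂ) * B).submatrix ![a, b] ![c, d] := by rw [one_mul]
      rw [e1, Matrix.submatrix_mul _ _ ![a,b] _root_.id ![c,d] Function.bijective_id]
      congr 1
      have e2 : B.submatrix _root_.id ![c, d] = (B * (1 : Matrix (Fin s) (Fin s) ℂ)).submatrix _root_.id ![c, d] := by rw [mul_one]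
      rw [e2, Matrix.submatrix_mul _ _ _root_.id _root_.id ![c,d] Function.bijective_id,
        Matrix.submatrix_id_id]
    have hle : M.rank ≤ B.rank := by
      rw [hsplit]
      exact le_trans (Matrix.rank_mul_le_right _ _) (Matrix.rank_mul_le_left _ _)
    omega
  · intro h
    by_cases hB : ∀ i j, B i j = 0
    · have : B = 0 := by ext i j; exact hB i j
      simp [this]
    · push_neg at hB
      obtain ⟨p, q, hpq⟩ := hB
      have hBeq : B = Matrix.vecMulVec (fun i => B i q / B p q) (fun j => B p j) := by
        ext i j
        rw [Matrix.vecMulVec_apply]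
        field_simp
        linear_combination h i p j q
      rw [hBeq, Matrix.vecMulVec_eq (Fin 1)]
      have h1 := Matrix.rank_mul_le_right (Matrix.replicateCol (Fin 1) (fun i => B i q / B p q))
        (Matrix.replicateRow (Fin 1) (fun j => B p j))
      have h2 := Matrix.rank_le_card_height (Matrix.replicateRow (Fin 1) (fun j => B p j))
      simp only [Fintype.card_fin] at h2
      exact h1.trans h2

section Core
variable {s : ℕ} (A : Matrix (Fin s) (Fin s) ℂ)

lemma fresh (hs : 4 ≤ s) (a b c : Fin s) :
    ∃ w : Fin s, w ≠ a ∧ w ≠ b ∧ w ≠ c := by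
  have h1 : ({b, c} : Finset (Fin s)).card ≤ 2 :=
    le_trans (Finset.card_insert_le _ _) (by simp)
  have hc3 : ({a, b, c} : Finset (Fin s)).card ≤ 3 :=
    le_trans (Finset.card_insert_le _ _) (by omega)
  have hne : (({a, b, c} : Finset (Fin s))ᶜ).Nonempty := by
    rw [← Finset.card_pos, Finset.card_compl, Fintype.card_fin]
    omega
  obtain ⟨w, hw⟩ := hne
  simp only [Finset.mem_compl, Finset.mem_insert, Finset.mem_singleton, not_or] at hw
  exact ⟨w, hw.1, hw.2.1, hw.2.2⟩

variable (hs : 4 ≤ s)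
  (hA : ∀ i j, A i j = A j i)
  (h1 : ∀ i j k l : Fin s, i ≠ j → i ≠ k → i ≠ l → j ≠ k → j ≠ l → k ≠ l →
    A i k * A j l = A i l * A j k)
  (h2 : ∀ i j k l : Fin s, i ≠ j → i ≠ k → i ≠ l → j ≠ k → j ≠ l → k ≠ l →
    A i i * A k l - A i k * A i l = A j j * A k l - A j k * A j l)
  (h3 : ∀ i j k l : Fin s, i ≠ j → i ≠ k → i ≠ l → j ≠ k → j ≠ l → k ≠ l →
    (A i i * A k k - A i k * A i k) - (A i i * A l l - A i l * A i l)
      = (A j j * A k k - A j k * A j k) - (A j j * A l l - A j l * A j l))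

include hs hA h1 h2 h3

/-- L2 : from the spec on the edge (p,q), the triple relation for pairs (p,l). -/
lemma lemL2 (p q : Fin s) (hpq : p ≠ q) (h0 : A p q ≠ 0) (μ : ℂ)
    (S : ∀ i, i ≠ p → i ≠ q → (A i i - μ) * A p q = A i p * A i q) :
    ∀ l, l ≠ p → l ≠ q → ∀ i, i ≠ p → i ≠ l → (A i i - μ) * A p l = A i p * A i l := by
  intro l hlp hlq
  have main : ∀ i, i ≠ p → i ≠ q → i ≠ l → (A i i - μ) * A p l = A i p * A i l := by
    intro i hip hiq hil
    apply mul_right_cancel₀ h0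
    linear_combination A p l * S i hip hiq + A i p * h1 i p q l hip hiq hil hpq hlp.symm hlq.symm
  intro i hip hil
  rcases eq_or_ne i q with rfl | hiq
  · obtain ⟨w, hwp, hwq, hwl⟩ := fresh hs p i l
    have prev := main w hwp hwq hwl
    linear_combination h2 i w p l hwq.symm hip hil hwp hwl hlp.symm + prev
  · exact main i hip hiq hil

/-- L3 : triple relation where both k, l avoid the edge {p,q}. -/
lemma lemL3 (p q : Fin s) (hpq : p ≠ q) (h0 : A p q ≠ 0) (μ : ℂ)
    (S : ∀ i, i ≠ p → i ≠ q → (A i i - μ) * A p q = A i p * A i q) :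
    ∀ k l, k ≠ p → k ≠ q → l ≠ p → l ≠ q → k ≠ l →
      ∀ i, i ≠ k → i ≠ l → (A i i - μ) * A k l = A i k * A i l := by
  intro k l hkp hkq hlp hlq hkl
  have L2 := lemL2 A hs hA h1 h2 h3 p q hpq h0 μ S
  have Fq : (A q q - μ) * A k l = A q k * A q l := by
    by_cases hpk : A p k ≠ 0
    · apply mul_right_cancel₀ hpk
      have T1 := L2 k hkp hkq q hpq.symm hkq.symm
      linear_combination A k l * T1 + A q k * h1 q k p l hkq.symm hpq.symm hlq.symm hkp hkl hlp.symm
        + A q k * A q l * hA k p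
    · push_neg at hpk
      by_cases hpl : A p l ≠ 0
      · apply mul_right_cancel₀ hpl
        have T1 := L2 l hlp hlq q hpq.symm hlq.symm
        linear_combination A k l * T1 + A q l * h1 q l p k hlq.symm hpq.symm hkq.symm hlp hkl.symm hkp.symm
          + A q l * A q p * hA k l + A q l * A q k * hA l p
      · push_neg at hpl
        have hkl0 : A k l = 0 := by
          have h := h1 p k q l hkp.symm hpq hlp.symm hkq hkl hlq.symm
          rw [hpl, zero_mul] at h
          exact (mul_eq_zero.mp h).resolve_left h0
        linear_combination h2 q p k l hpq.symm hkq.symm hlq.symm hkp.symm hlp.symm hkl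
          + (A p p - μ) * hkl0 - A p l * hpk
  intro i hik hil
  rcases eq_or_ne i q with rfl | hiq
  · exact Fq
  · linear_combination h2 i q k l hiq hik hil hkq.symm hlq.symm hkl + Fq

lemma lemC (p q : Fin s) (hpq : p ≠ q) (h0 : A p q ≠ 0) (μ : ℂ)
    (S : ∀ i, i ≠ p → i ≠ q → (A i i - μ) * A p q = A i p * A i q) :
    ∀ i k l, i ≠ k → i ≠ l → k ≠ l → (A i i - μ) * A k l = A i k * A i l := by
  have h0' : A q p ≠ 0 := by rw [hA q p]; exact h0
  have S' : ∀ i, i ≠ q → i ≠ p → (A i i - μ) * A q p = A i q * A i p := by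
    intro i hiq hip
    linear_combination S i hip hiq + (A i i - μ) * hA q p
  have L2p := lemL2 A hs hA h1 h2 h3 p q hpq h0 μ S
  have L2q := lemL2 A hs hA h1 h2 h3 q p hpq.symm h0' μ S'
  have L3 := lemL3 A hs hA h1 h2 h3 p q hpq h0 μ S
  intro i k l hik hil hkl
  rcases eq_or_ne k p with rfl | hkp
  · rcases eq_or_ne l q with rfl | hlq
    · exact S i hik hil
    · exact L2p l hkl.symm hlq i hik hil
  · rcases eq_or_ne k q with rfl | hkq
    · rcases eq_or_ne l p with rfl | hlp
      · exact S' i hik hil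
      · exact L2q l hkl.symm hlp i hik hil
    · rcases eq_or_ne l p with rfl | hlp
      · linear_combination L2p k hkp hkq i hil hik + (A i i - μ) * hA k l
      · rcases eq_or_ne l q with rfl | hlq
        · linear_combination L2q k hkq hkp i hil hik + (A i i - μ) * hA k l
        · exact L3 k l hkp hkq hlp hlq hkl i hik hil

lemma lemD (p q : Fin s) (hpq : p ≠ q) (h0 : A p q ≠ 0) (μ : ℂ)
    (S : ∀ i, i ≠ p → i ≠ q → (A i i - μ) * A p q = A i p * A i q) :
    ∀ a b, a ≠ b → (A a a - μ) * (A b b - μ) = A a b * A b a := by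
  have C := lemC A hs hA h1 h2 h3 p q hpq h0 μ S
  have ezero : ∀ x, x ≠ p → x ≠ q → A x p = 0 → A x x - μ = 0 := by
    intro x hxp hxq hxp0
    have Sx := S x hxp hxq
    rw [hxp0, zero_mul] at Sx
    exact (mul_eq_zero.mp Sx).resolve_right h0
  have ezero' : ∀ x, x ≠ p → x ≠ q → A x q = 0 → A x x - μ = 0 := by
    intro x hxp hxq hxq0
    have Sx := S x hxp hxq
    rw [hxq0, mul_zero] at Sx
    exact (mul_eq_zero.mp Sx).resolve_right h0
  intro a b hab
  by_cases hex : ∃ c, c ≠ a ∧ c ≠ b ∧ A a c ≠ 0 ∧ A b c ≠ 0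
  · obtain ⟨c, hca, hcb, hac, hbc⟩ := hex
    apply mul_right_cancel₀ (mul_ne_zero hac hbc)
    have C1 := C a b c hab hca.symm hcb.symm
    have C2 := C b a c hab.symm hcb.symm hca.symm
    linear_combination ((A b b - μ) * A a c) * C1 + (A a b * A a c) * C2
  · push_neg at hex
    by_cases hab0 : A a b = 0
    · have hba0 : A b a = 0 := by rw [hA b a]; exact hab0
      have key : (A a a - μ) = 0 ∨ (A b b - μ) = 0 := by
        rcases eq_or_ne a p with hap | hap
        · right
          have hbp : b ≠ p := by rw [← hap]; exact hab.symm
          have hbq : b ≠ q := by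
            intro h; apply h0; rw [← hap, ← h]; exact hab0
          exact ezero b hbp hbq (by rw [← hap]; exact hba0)
        · rcases eq_or_ne a q with haq | haq
          · right
            have hbq : b ≠ q := by rw [← haq]; exact hab.symm
            have hbp : b ≠ p := by
              intro h; apply h0; rw [hA p q, ← haq, ← h]; exact hab0
            exact ezero' b hbp hbq (by rw [← haq]; exact hba0)
          · rcases eq_or_ne b p with hbp | hbp
            · left
              exact ezero a hap haq (by rw [← hbp]; exact hab0)
            · rcases eq_or_ne b q with hbq | hbq
              · left
                exact ezero' a hap haq (by rw [← hbq]; exact hab0)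
              · by_cases hap0 : A a p = 0
                · left; exact ezero a hap haq hap0
                · right
                  exact ezero b hbp hbq (hex p (Ne.symm hap) (Ne.symm hbp) hap0)
      rcases key with h | h
      · linear_combination ((A b b - μ)) * h - A b a * hab0
      · linear_combination ((A a a - μ)) * h - A b a * hab0
    · have zero : ∀ x, x ≠ a → x ≠ b → A a x = 0 ∧ A b x = 0 := by
        intro x hxa hxb
        by_cases hax : A a x = 0
        · refine ⟨hax, ?_⟩
          have C2 := C b a x hab.symm hxb.symm hxa.symm
          rw [hax, mul_zero] at C2
          rcases mul_eq_zero.mp C2.symm with h | h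
          · exact absurd (by rw [hA a b]; exact h) hab0
          · exact h
        · have hbx : A b x = 0 := hex x hxa hxb hax
          refine ⟨?_, hbx⟩
          have C1 := C a b x hab hxa.symm hxb.symm
          rw [hbx, mul_zero] at C1
          rcases mul_eq_zero.mp C1.symm with h | h
          · exact absurd h hab0
          · exact h
      obtain ⟨w, hwa, hwb, -⟩ := fresh hs a b a
      obtain ⟨x, hxa, hxb, hxw⟩ := fresh hs a b w
      obtain ⟨haw, hbw⟩ := zero w hwa hwb
      obtain ⟨hax, hbx⟩ := zero x hxa hxb
      have hwb' : A w b = 0 := by rw [hA w b]; exact hbw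
      have hxb' : A x b = 0 := by rw [hA x b]; exact hbx
      have hwx : A w x = 0 := by
        have h := h1 a w b x hwa.symm hab hxa.symm hwb hxw.symm hxb.symm
        rw [hax, zero_mul] at h
        exact (mul_eq_zero.mp h).resolve_left hab0
      have eww : A w w = μ := by
        have Cw := C w a b hwa hwb hab
        rw [hwb', mul_zero] at Cw
        have h := (mul_eq_zero.mp Cw).resolve_right hab0
        exact sub_eq_zero.mp h
      have exx : A x x = μ := by
        have Cx := C x a b hxa hxb hab
        rw [hxb', mul_zero] at Cx
        have h := (mul_eq_zero.mp Cx).resolve_right hab0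
        exact sub_eq_zero.mp h
      have H3 := h3 a w b x hwa.symm hab hxa.symm hwb hxw.symm hxb.symm
      rw [hax, hwb', hwx, eww, exx] at H3
      linear_combination H3 + A a b * hA a b

lemma key : ∃ μ : ℂ,
    (∀ i k l, i ≠ k → i ≠ l → k ≠ l → (A i i - μ) * A k l = A i k * A i l) ∧
    (∀ a b, a ≠ b → (A a a - μ) * (A b b - μ) = A a b * A b a) := by
  by_cases hoff : ∀ x y : Fin s, x ≠ y → A x y = 0
  · have h3' : ∀ i j k l : Fin s, i ≠ j → i ≠ k → i ≠ l → j ≠ k → j ≠ l → k ≠ l →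
        (A i i - A j j) * (A k k - A l l) = 0 := by
      intro i j k l hij hik hil hjk hjl hkl
      linear_combination h3 i j k l hij hik hil hjk hjl hkl + A i k * hoff i k hik
        - A i l * hoff i l hil - A j k * hoff j k hjk + A j l * hoff j l hjl
    have i0 : Fin s := ⟨0, by omega⟩
    by_cases hd : ∀ i j : Fin s, A i i = A j j
    · refine ⟨A i0 i0, ?_, ?_⟩
      · intro i k l hik hil hkl
        rw [hoff k l hkl, hoff i k hik, hoff i l hil]; ring
      · intro a b hab
        rw [hd a i0, hd b i0, hoff a b hab, hoff b a hab.symm]; ring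
    · push_neg at hd
      obtain ⟨p, q, hdpq⟩ := hd
      have hpq : p ≠ q := fun h => hdpq (by rw [h])
      obtain ⟨k₀, hk₀p, hk₀q, -⟩ := fresh hs p q p
      obtain ⟨l₀, hl₀p, hl₀q, hl₀k₀⟩ := fresh hs p q k₀
      have hdl₀ : A l₀ l₀ = A k₀ k₀ := by
        have h := h3' p q l₀ k₀ hpq hl₀p.symm hk₀p.symm hl₀q.symm hk₀q.symm hl₀k₀
        rcases mul_eq_zero.mp h with h | h
        · exact absurd (sub_eq_zero.mp h) hdpq
        · exact sub_eq_zero.mp h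
      have hallc : ∀ x, x ≠ p → x ≠ q → A x x = A k₀ k₀ := by
        intro x hxp hxq
        rcases eq_or_ne x k₀ with rfl | hxk₀
        · rfl
        · have h := h3' p q x k₀ hpq hxp.symm hk₀p.symm hxq.symm hk₀q.symm hxk₀
          rcases mul_eq_zero.mp h with h | h
          · exact absurd (sub_eq_zero.mp h) hdpq
          · exact sub_eq_zero.mp h
      have hporq : A p p = A k₀ k₀ ∨ A q q = A k₀ k₀ := by
        have h := h3' p k₀ q l₀ hk₀p.symm hpq hl₀p.symm hk₀q hl₀k₀.symm hl₀q.symm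
        rcases mul_eq_zero.mp h with h | h
        · exact Or.inl (sub_eq_zero.mp h)
        · exact Or.inr ((sub_eq_zero.mp h).trans hdl₀)
      refine ⟨A k₀ k₀, ?_, ?_⟩
      · intro i k l hik hil hkl
        rw [hoff k l hkl, hoff i k hik, hoff i l hil]; ring
      · intro a b hab
        have hz : (A a a - A k₀ k₀ = 0) ∨ (A b b - A k₀ k₀ = 0) := by
          rcases hporq with hp' | hq'
          · have hall : ∀ x, x ≠ q → A x x = A k₀ k₀ := by
              intro x hxq
              rcases eq_or_ne x p with rfl | hxp
              · exact hp'
              · exact hallc x hxp hxq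
            rcases eq_or_ne a q with rfl | haq
            · exact Or.inr (sub_eq_zero.mpr (hall b hab.symm))
            · exact Or.inl (sub_eq_zero.mpr (hall a haq))
          · have hall : ∀ x, x ≠ p → A x x = A k₀ k₀ := by
              intro x hxp
              rcases eq_or_ne x q with rfl | hxq
              · exact hq'
              · exact hallc x hxp hxq
            rcases eq_or_ne a p with rfl | hap
            · exact Or.inr (sub_eq_zero.mpr (hall b hab.symm))
            · exact Or.inl (sub_eq_zero.mpr (hall a hap))
        rcases hz with h | h
        · linear_combination (A b b - A k₀ k₀) * h - A b a * hoff a b hab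
        · linear_combination (A a a - A k₀ k₀) * h - A b a * hoff a b hab
  · push_neg at hoff
    obtain ⟨p, q, hpq, h0⟩ := hoff
    obtain ⟨w₀, hw₀p, hw₀q, -⟩ := fresh hs p q p
    set μ := A w₀ w₀ - A w₀ p * A w₀ q / A p q with hμ
    have base : (A w₀ w₀ - μ) * A p q = A w₀ p * A w₀ q := by
      rw [hμ]
      field_simp
      ring
    have S : ∀ i, i ≠ p → i ≠ q → (A i i - μ) * A p q = A i p * A i q := by
      intro i hip hiq
      rcases eq_or_ne i w₀ with rfl | hiw₀
      · exact base
      · linear_combination h2 i w₀ p q hiw₀ hip hiq hw₀p hw₀q hpq + base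
    exact ⟨μ, lemC A hs hA h1 h2 h3 p q hpq h0 μ S, lemD A hs hA h1 h2 h3 p q hpq h0 μ S⟩

lemma red (μ : ℂ)
    (hC : ∀ i k l, i ≠ k → i ≠ l → k ≠ l → (A i i - μ) * A k l = A i k * A i l)
    (hD : ∀ a b, a ≠ b → (A a a - μ) * (A b b - μ) = A a b * A b a) :
    ∀ a b c d, (A - μ • 1) a c * (A - μ • 1) b d = (A - μ • 1) a d * (A - μ • 1) b c := by
  have hdiag : ∀ x, (A - μ • (1 : Matrix (Fin s) (Fin s) ℂ)) x x = A x x - μ := by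
    intro x
    simp [Matrix.sub_apply, Matrix.smul_apply, Matrix.one_apply]
  have hoffd : ∀ x y, x ≠ y → (A - μ • (1 : Matrix (Fin s) (Fin s) ℂ)) x y = A x y := by
    intro x y hxy
    simp [Matrix.sub_apply, Matrix.smul_apply, Matrix.one_apply, hxy]
  intro a b c d
  rcases eq_or_ne a b with rfl | hab
  · ring
  rcases eq_or_ne c d with rfl | hcd
  · ring
  by_cases hca : c = a
  · rw [hca]
    by_cases hdb : d = b
    · rw [hdb, hdiag a, hdiag b, hoffd a b hab, hoffd b a hab.symm]
      exact hD a b hab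
    · have had : a ≠ d := by rw [← hca]; exact hcd
      have hbd : b ≠ d := fun h => hdb h.symm
      rw [hdiag a, hoffd b d hbd, hoffd a d had, hoffd b a hab.symm]
      linear_combination hC a b d hab had hbd + A a d * hA a b
  · by_cases hda : d = a
    · rw [hda]
      by_cases hcb : c = b
      · rw [hcb, hoffd a b hab, hoffd b a hab.symm, hdiag a, hdiag b]
        linear_combination (-1 : ℂ) * hD a b hab
      · have hac : a ≠ c := fun h => hca h.symm
        have hbc : b ≠ c := fun h => hcb h.symm
        rw [hoffd a c hac, hoffd b a hab.symm, hdiag a, hoffd b c hbc]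
        linear_combination (-1 : ℂ) * hC a b c hab hac hbc + A a c * hA b a
    · have had : a ≠ d := fun h => hda h.symm
      have hac : a ≠ c := fun h => hca h.symm
      by_cases hcb : c = b
      · rw [hcb]
        have hbd : b ≠ d := by rw [← hcb]; exact hcd
        rw [hoffd a b hab, hoffd b d hbd, hoffd a d had, hdiag b]
        linear_combination (-1 : ℂ) * hC b a d hab.symm hbd had + A b d * hA a b
      · have hbc : b ≠ c := fun h => hcb h.symm
        by_cases hdb : d = b
        · rw [hdb, hoffd a c hac, hdiag b, hoffd a b hab, hoffd b c hbc]
          linear_combination hC b a c hab.symm hbc hac + A b c * hA b a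
        · have hbd : b ≠ d := fun h => hdb h.symm
          rw [hoffd a c hac, hoffd b d hbd, hoffd a d had, hoffd b c hbc]
          exact h1 a b c d hab hac had hbc hbd hcd

end Core

/-- A complex symmetric `s × s` matrix (`s ≥ 4`) has an eigenspace of codimension at
most `1` (i.e. `A − μ•1` has rank at most `1` for some `μ`) if and only if its `2×2`
minors satisfy the stated relations for all pairwise distinct indices. -/
theorem symmetric_rank_one_perturbation_iff_minors (s : ℕ) (hs : 4 ≤ s)
    (A : Matrix (Fin s) (Fin s) ℂ) (hA : Aᵀ = A) :
    (∃ μ : ℂ, (A - μ • (1 : Matrix (Fin s) (Fin s) ℂ)).rank ≤ 1)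
      ↔ ∀ i j k l : Fin s, i ≠ j → i ≠ k → i ≠ l → j ≠ k → j ≠ l → k ≠ l →
          minor2 A i j k l = 0 ∧
          minor2 A i k i l = minor2 A j k j l ∧
          minor2 A i k i k - minor2 A i l i l = minor2 A j k j k - minor2 A j l j l := by
  have hsym : ∀ i j, A i j = A j i := by
    intro i j
    have h := congrFun (congrFun hA j) i
    rw [Matrix.transpose_apply] at h
    exact h
  constructor
  · rintro ⟨μ, hrank⟩
    have hm := (rank_le_one_iff_minor _).mp hrank
    have hdiag : ∀ x, (A - μ • (1 : Matrix (Fin s) (Fin s) ℂ)) x x = A x x - μ := by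
      intro x
      simp [Matrix.sub_apply, Matrix.smul_apply, Matrix.one_apply]
    have hoffd : ∀ x y, x ≠ y → (A - μ • (1 : Matrix (Fin s) (Fin s) ℂ)) x y = A x y := by
      intro x y hxy
      simp [Matrix.sub_apply, Matrix.smul_apply, Matrix.one_apply, hxy]
    intro i j k l hij hik hil hjk hjl hkl
    refine ⟨?_, ?_, ?_⟩
    · have h := hm i j k l
      rw [hoffd i k hik, hoffd j l hjl, hoffd i l hil, hoffd j k hjk] at h
      unfold minor2
      linear_combination h
    · have h := hm i k i l
      have h' := hm j k j l
      rw [hdiag i, hoffd k l hkl, hoffd i l hil, hoffd k i hik.symm] at h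
      rw [hdiag j, hoffd k l hkl, hoffd j l hjl, hoffd k j hjk.symm] at h'
      unfold minor2
      linear_combination h - h'
    · have e1 := hm i k i k
      have e2 := hm i l i l
      have e3 := hm j k j k
      have e4 := hm j l j l
      rw [hdiag i, hdiag k, hoffd i k hik, hoffd k i hik.symm] at e1
      rw [hdiag i, hdiag l, hoffd i l hil, hoffd l i hil.symm] at e2
      rw [hdiag j, hdiag k, hoffd j k hjk, hoffd k j hjk.symm] at e3
      rw [hdiag j, hdiag l, hoffd j l hjl, hoffd l j hjl.symm] at e4
      unfold minor2
      linear_combination e1 - e2 - e3 + e4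
  · intro h
    have h1 : ∀ i j k l : Fin s, i ≠ j → i ≠ k → i ≠ l → j ≠ k → j ≠ l → k ≠ l →
        A i k * A j l = A i l * A j k := by
      intro i j k l hij hik hil hjk hjl hkl
      have := (h i j k l hij hik hil hjk hjl hkl).1
      unfold minor2 at this
      linear_combination this
    have h2 : ∀ i j k l : Fin s, i ≠ j → i ≠ k → i ≠ l → j ≠ k → j ≠ l → k ≠ l →
        A i i * A k l - A i k * A i l = A j j * A k l - A j k * A j l := by
      intro i j k l hij hik hil hjk hjl hkl
      have := (h i j k l hij hik hil hjk hjl hkl).2.1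
      unfold minor2 at this
      linear_combination this + A i l * hsym k i - A j l * hsym k j
    have h3 : ∀ i j k l : Fin s, i ≠ j → i ≠ k → i ≠ l → j ≠ k → j ≠ l → k ≠ l →
        (A i i * A k k - A i k * A i k) - (A i i * A l l - A i l * A i l)
          = (A j j * A k k - A j k * A j k) - (A j j * A l l - A j l * A j l) := by
      intro i j k l hij hik hil hjk hjl hkl
      have := (h i j k l hij hik hil hjk hjl hkl).2.2
      unfold minor2 at this
      linear_combination this + A i k * hsym k i - A i l * hsym l i
        - A j k * hsym k j + A j l * hsym l j
    obtain ⟨μ, hC, hD⟩ := key A hs hsym h1 h2 h3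
    exact ⟨μ, (rank_le_one_iff_minor _).mpr (red A hs hsym h1 h2 h3 μ hC hD)⟩
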